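/- Let Γ be a Bieberbach-type subgroup of the affine group of ℝⁿ with parameters (n, q), with u_γ ∈ (1/q)ℤⁿ for every γ ∈ Γ. Let A ∈ GLₙ(ℤ) and x₀ ∈ ℝⁿ be such that the affine map L(x) = A x + x₀ satisfies ψ(γ) := L ∘ γ ∘ L⁻¹ ∈ Γ for every γ ∈ Γ, and assume g_{ψ(γ)} = g_γ for all γ ∈ Γ. Suppose w ∈ ℝⁿ satisfies A u_γ − u_{ψ(γ)} = g_γ(w) − w for every γ ∈ Γ. Define the affine bijection 𝔸(x) = A x + w. Then 𝔸 ∘ γ ∘ 𝔸⁻¹ = ψ(γ) = L ∘ γ ∘ L⁻¹ for every γ ∈ Γ. -/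

import Mathlib

open Matrix

noncomputable section

abbrev Aff (n : ℕ) := (Fin n → ℝ) ≃ᵃ[ℝ] (Fin n → ℝ)

/-- `ℤⁿ` as a subset of `ℝⁿ`. -/
def intVec (n : ℕ) : Set (Fin n → ℝ) := {v | ∀ i, ∃ m : ℤ, v i = m}

/-- `(1/q)ℤⁿ` as a subset of `ℝⁿ`. -/
def qIntVec (n q : ℕ) : Set (Fin n → ℝ) := {v | ∀ i, ∃ m : ℤ, (q : ℝ) * v i = m}

/-- The translation part `u_γ` of an affine bijection. -/
def uPart {n : ℕ} (γ : Aff n) : Fin n → ℝ := γ 0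

/-- The linear part `g_γ` of an affine bijection. -/
def gPart {n : ℕ} (γ : Aff n) : (Fin n → ℝ) →ₗ[ℝ] (Fin n → ℝ) := γ.linear

/-- A linear map lies in `GLₙ(ℤ)` if it is given by an integer matrix invertible over `ℤ`. -/
def IsIntegralGL {n : ℕ} (f : (Fin n → ℝ) →ₗ[ℝ] (Fin n → ℝ)) : Prop :=
  ∃ M : Matrix (Fin n) (Fin n) ℤ, IsUnit M ∧ ∀ x, f x = (M.map (Int.cast : ℤ → ℝ)) *ᵥ x

/-- The subgroup of translations by integer vectors. -/
def intTranslations (n : ℕ) : Subgroup (Aff n) where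
  carrier := {γ | ∃ m ∈ intVec n, ∀ x, γ x = x + m}
  one_mem' := ⟨0, fun i => ⟨0, by simp⟩, fun x => by simp [AffineEquiv.one_def]⟩
  mul_mem' := by
    rintro a b ⟨ma, hma, ha⟩ ⟨mb, hmb, hb⟩
    refine ⟨mb + ma, fun i => ?_, fun x => ?_⟩
    · obtain ⟨p, hp⟩ := hma i; obtain ⟨r, hr⟩ := hmb i
      exact ⟨r + p, by simp [Pi.add_apply, hp, hr]⟩
    · simp [AffineEquiv.coe_mul, Function.comp, hb, ha, add_assoc]
  inv_mem' := by
    rintro a ⟨m, hm, ha⟩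
    refine ⟨-m, fun i => ?_, fun x => ?_⟩
    · obtain ⟨p, hp⟩ := hm i; exact ⟨-p, by simp [hp]⟩
    · have : a (x + -m) = x := by rw [ha]; abel
      calc a⁻¹ x = a⁻¹ (a (x + -m)) := by rw [this]
      _ = x + -m := by rw [AffineEquiv.inv_def, AffineEquiv.symm_apply_apply]

/-- A Bieberbach-type subgroup of the affine group of `ℝⁿ` with parameters `(n, q)`. -/
structure IsBieberbach {n : ℕ} (Γ : Subgroup (Aff n)) (q : ℕ) : Prop where
  /-- every element has linear part in `GLₙ(ℤ)` -/
  integral : ∀ γ ∈ Γ, IsIntegralGL (gPart γ)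
  /-- elements with identity linear part are integer translations -/
  trans_of_linear_id : ∀ γ ∈ Γ, γ.linear = LinearEquiv.refl ℝ (Fin n → ℝ) → γ ∈ intTranslations n
  /-- all integer translations belong to `Γ` -/
  trans_le : intTranslations n ≤ Γ
  /-- the integer translations have index `q` in `Γ` -/
  index_eq : ((intTranslations n).subgroupOf Γ).index = q


/-- **Claim 3** (Farrell–Gogolev, proof of Proposition 3): let `Γ` be a Bieberbach-type
subgroup with parameters `(n, q)` whose translation parts lie in `(1/q)ℤⁿ`, let
`A ∈ GLₙ(ℤ)` and `x₀ ∈ ℝⁿ` be such that `L(x) = A x + x₀` normalizes `Γ` with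
`ψ(γ) := L ∘ γ ∘ L⁻¹ ∈ Γ` and `g_{ψ(γ)} = g_γ`, and suppose `w` satisfies
`A u_γ − u_{ψ(γ)} = g_γ w − w` for all `γ ∈ Γ`. Then conjugation by the affine
bijection `𝔸(x) = A x + w` restricted to `Γ` is `ψ`, i.e.
`𝔸 ∘ γ ∘ 𝔸⁻¹ = ψ(γ) = L ∘ γ ∘ L⁻¹` (equivalently `ψ(γ) ∘ 𝔸 = 𝔸 ∘ γ`) for `γ ∈ Γ`. -/
theorem claim3 {n q : ℕ} (hq : 0 < q) (Γ : Subgroup (Aff n)) (hΓ : IsBieberbach Γ q)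
    (hu : ∀ γ ∈ Γ, uPart γ ∈ qIntVec n q)
    (A : Matrix (Fin n) (Fin n) ℤ) (hA : IsUnit A)
    (x₀ : Fin n → ℝ) (L : Aff n)
    (hL : ∀ x, L x = (A.map (Int.cast : ℤ → ℝ)) *ᵥ x + x₀)
    (hψmem : ∀ γ : Γ, (L * (γ : Aff n) * L⁻¹) ∈ Γ)
    (hψg : ∀ γ : Γ, gPart (L * (γ : Aff n) * L⁻¹) = gPart (γ : Aff n))
    (w : Fin n → ℝ)
    (hw : ∀ γ : Γ, (A.map (Int.cast : ℤ → ℝ)) *ᵥ uPart (γ : Aff n)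
        - uPart (L * (γ : Aff n) * L⁻¹) = gPart (γ : Aff n) w - w) :
    ∀ (γ : Γ) (x : Fin n → ℝ),
      (L * (γ : Aff n) * L⁻¹) ((A.map (Int.cast : ℤ → ℝ)) *ᵥ x + w)
        = (A.map (Int.cast : ℤ → ℝ)) *ᵥ ((γ : Aff n) x) + w := by
  intro γ x
  set B := A.map (Int.cast : ℤ → ℝ) with hB
  set g : Aff n := (γ : Aff n)
  set ψ : Aff n := L * (γ : Aff n) * L⁻¹ with hψ
  -- linear part applied to a vector
  have lin_apply : ∀ (f : Aff n) (v : Fin n → ℝ), f.linear v = f v - f 0 := by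
    intro f v
    have h := f.toAffineMap.map_vadd 0 v
    simp only [vadd_eq_add, add_zero, AffineEquiv.coe_toAffineMap,
      AffineEquiv.linear_toAffineMap] at h
    rw [h]; abel
  have hLlin : ∀ v, L.linear v = B *ᵥ v := by
    intro v
    rw [lin_apply, hL, hL]
    simp [Matrix.mulVec_zero]
  -- ψ (L y) = L (g y)
  have hconj : ∀ y, ψ (L y) = L (g y) := by
    intro y
    simp [hψ, AffineEquiv.mul_def, AffineEquiv.inv_def]
    rfl
  -- ψ.linear = g.linear
  have hlin : ∀ v, ψ.linear v = g.linear v := by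
    intro v
    have := hψg γ
    simpa [gPart] using congrFun (congrArg (fun (f : (Fin n → ℝ) →ₗ[ℝ] (Fin n → ℝ)) => (f : (Fin n → ℝ) → (Fin n → ℝ))) this) v
  -- commutation: g.linear (B *ᵥ v) = B *ᵥ g.linear v
  have hcomm : ∀ v, g.linear (B *ᵥ v) = B *ᵥ g.linear v := by
    intro v
    have h1 : g.linear (B *ᵥ v) = ψ.linear (L.linear v) := by rw [hLlin, hlin]
    have h2 : ψ.linear (L.linear v) = ψ (L v) - ψ (L 0) := by
      rw [lin_apply L, map_sub, lin_apply ψ, lin_apply ψ]; abel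
    rw [h1, h2, hconj, hconj, lin_apply g, hL, hL, Matrix.mulVec_sub]
    abel
  -- affine decomposition
  have haff : ∀ (f : Aff n) (v : Fin n → ℝ), f v = f.linear v + f 0 := by
    intro f v
    rw [lin_apply]; abel
  have hw' := hw γ
  simp only [gPart, uPart] at hw'
  rw [haff ψ, haff g, hlin, map_add, hcomm, Matrix.mulVec_add]
  have : g.linear w - w = B *ᵥ g 0 - ψ 0 := hw'.symm
  have h2 : g.linear w + ψ 0 = B *ᵥ g 0 + w := by
    have := sub_eq_sub_iff_add_eq_add.mp this
    linear_combination (norm := abel) this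
  rw [add_assoc, h2]; abel
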